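/- The localized nonlocal perimeter is lower semicontinuous under L¹_loc convergence: if E_k → E in L¹_loc(ℝⁿ) then Per(E, U) ≤ liminf_k Per(E_k, U) for every open U ⊆ ℝⁿ. -/

import Mathlib

open MeasureTheory Filter
open scoped ENNReal

/-- `(χ_E(x) - χ_E(y))²` as an extended nonnegative real. -/
noncomputable def jumpWeight {n : ℕ} (E : Set (EuclideanSpace ℝ (Fin n)))
    (x y : EuclideanSpace ℝ (Fin n)) : ℝ≥0∞ :=
  ENNReal.ofReal ((E.indicator (fun _ => (1 : ℝ)) x
    - E.indicator (fun _ => (1 : ℝ)) y) ^ 2)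

/-- The localized nonlocal perimeter in symmetric form:
`Per(E,U) = ½∫_{U×U} (χ_E(x)−χ_E(y))² K(x−y) + ∫_{U×Uᶜ} (χ_E(x)−χ_E(y))² K(x−y)`. -/
noncomputable def nonlocalPerLoc {n : ℕ} (K : EuclideanSpace ℝ (Fin n) → ℝ≥0∞)
    (E U : Set (EuclideanSpace ℝ (Fin n))) : ℝ≥0∞ :=
  (1 / 2) * (∫⁻ p in U ×ˢ U, jumpWeight E p.1 p.2 * K (p.1 - p.2) ∂volume) +
  ∫⁻ p in U ×ˢ Uᶜ, jumpWeight E p.1 p.2 * K (p.1 - p.2) ∂volume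

section aux

variable {n : ℕ}

local notation "X" => EuclideanSpace ℝ (Fin n)

/-- The combined integrand realizing `nonlocalPerLoc` as a single integral. -/
noncomputable def perIntegrand (K : EuclideanSpace ℝ (Fin n) → ℝ≥0∞)
    (E U : Set (EuclideanSpace ℝ (Fin n)))
    (p : EuclideanSpace ℝ (Fin n) × EuclideanSpace ℝ (Fin n)) : ℝ≥0∞ :=
  (U ×ˢ U).indicator (fun q => (1 / 2) * (jumpWeight E q.1 q.2 * K (q.1 - q.2))) p +
  (U ×ˢ Uᶜ).indicator (fun q => jumpWeight E q.1 q.2 * K (q.1 - q.2)) p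

lemma jumpWeight_measurable {E : Set (EuclideanSpace ℝ (Fin n))} (hE : MeasurableSet E)
    {K : EuclideanSpace ℝ (Fin n) → ℝ≥0∞} (hK : Measurable K) :
    Measurable (fun p : (EuclideanSpace ℝ (Fin n)) × (EuclideanSpace ℝ (Fin n)) =>
      jumpWeight E p.1 p.2 * K (p.1 - p.2)) := by
  have hind : Measurable (E.indicator (fun _ => (1 : ℝ))) :=
    measurable_const.indicator hE
  have h1 : Measurable (fun p : X × X =>
      jumpWeight E p.1 p.2) := by
    unfold jumpWeight
    exact (((hind.comp measurable_fst).sub (hind.comp measurable_snd)).pow_const 2).ennreal_ofReal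
  exact h1.mul (hK.comp (measurable_fst.sub measurable_snd))

lemma perIntegrand_measurable {K : EuclideanSpace ℝ (Fin n) → ℝ≥0∞} (hK : Measurable K)
    {E U : Set (EuclideanSpace ℝ (Fin n))} (hE : MeasurableSet E) (hU : IsOpen U) :
    Measurable (perIntegrand K E U) := by
  have hm := jumpWeight_measurable hE hK
  exact ((measurable_const.mul hm).indicator
      (hU.measurableSet.prod hU.measurableSet)).add
    (hm.indicator (hU.measurableSet.prod hU.measurableSet.compl))

lemma nonlocalPerLoc_eq_lintegral {K : EuclideanSpace ℝ (Fin n) → ℝ≥0∞} (hK : Measurable K)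
    {E U : Set (EuclideanSpace ℝ (Fin n))} (hE : MeasurableSet E) (hU : IsOpen U) :
    nonlocalPerLoc K E U = ∫⁻ p, perIntegrand K E U p ∂volume := by
  have hm := jumpWeight_measurable hE hK
  rw [nonlocalPerLoc]
  unfold perIntegrand
  rw [lintegral_add_left (f := (U ×ˢ U).indicator (fun q => (1 / 2 : ℝ≥0∞) * (jumpWeight E q.1 q.2 * K (q.1 - q.2)))) ((measurable_const.mul hm).indicator
      (hU.measurableSet.prod hU.measurableSet)),
    lintegral_indicator (hU.measurableSet.prod hU.measurableSet) _,
    lintegral_indicator (hU.measurableSet.prod hU.measurableSet.compl) _,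
    lintegral_const_mul _ hm]

end aux

/-- Lower semicontinuity of the localized nonlocal perimeter with respect to
`L¹_loc` convergence of sets. -/
theorem nonlocalPerLoc_lsc {n : ℕ}
    (K : EuclideanSpace ℝ (Fin n) → ℝ≥0∞) (hKmeas : Measurable K)
    (hKsymm : ∀ h, K (-h) = K h)
    (E : Set (EuclideanSpace ℝ (Fin n))) (hE : MeasurableSet E)
    (Ek : ℕ → Set (EuclideanSpace ℝ (Fin n))) (hEk : ∀ k, MeasurableSet (Ek k))
    (hconv : ∀ A : Set (EuclideanSpace ℝ (Fin n)), IsCompact A →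
      Tendsto (fun k => volume (symmDiff (Ek k) E ∩ A)) atTop (nhds 0))
    (U : Set (EuclideanSpace ℝ (Fin n))) (hU : IsOpen U) :
    nonlocalPerLoc K E U ≤ atTop.liminf fun k => nonlocalPerLoc K (Ek k) U := by
  set f : ℕ → ℝ≥0∞ := fun k => nonlocalPerLoc K (Ek k) U with hf
  set a : ℝ≥0∞ := atTop.liminf f with ha
  rcases eq_or_ne a ⊤ with htop | htop
  · rw [htop]; exact le_top
  -- extract a good subsequence
  have hfreq : ∀ m : ℕ, ∃ᶠ k in atTop,
      f k < a + (m : ℝ≥0∞)⁻¹ ∧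
        volume (symmDiff (Ek k) E ∩ Metric.closedBall 0 m) ≤ (1 / 2) ^ m := by
    intro m
    have h1 : ∃ᶠ k in atTop, f k < a + (m : ℝ≥0∞)⁻¹ := by
      refine frequently_lt_of_liminf_lt (by isBoundedDefault) ?_
      exact ENNReal.lt_add_right htop (by simp)
    have h2 : ∀ᶠ k in atTop,
        volume (symmDiff (Ek k) E ∩ Metric.closedBall 0 m) ≤ (1 / 2) ^ m := by
      have := hconv (Metric.closedBall 0 m) (isCompact_closedBall 0 m)
      exact this.eventually_le_const (by simp [ENNReal.pow_pos])
    exact h1.and_eventually h2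
  obtain ⟨φ, hφmono, hφ⟩ := extraction_forall_of_frequently hfreq
  -- Borel–Cantelli: a.e. point eventually has equal indicator values
  set s : ℕ → Set (EuclideanSpace ℝ (Fin n)) :=
    fun m => symmDiff (Ek (φ m)) E ∩ Metric.closedBall 0 m with hs
  have hBC : volume (atTop.limsup s) = 0 := by
    refine measure_limsup_atTop_eq_zero ?_
    refine ne_top_of_le_ne_top ?_ (Summable.tsum_le_tsum (fun m => (hφ m).2)
      ENNReal.summable ENNReal.summable)
    rw [ENNReal.tsum_geometric]
    simp [ENNReal.one_sub_inv_two]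
  have hae : ∀ᵐ x ∂(volume : Measure (EuclideanSpace ℝ (Fin n))),
      ∀ᶠ m in atTop, (Ek (φ m)).indicator (fun _ => (1 : ℝ)) x
        = E.indicator (fun _ => (1 : ℝ)) x := by
    rw [ae_iff]
    refine measure_mono_null ?_ hBC
    intro x hx
    simp only [Set.mem_setOf_eq] at hx
    rw [mem_limsup_iff_frequently_mem]
    by_contra hfr
    rw [not_frequently] at hfr
    apply hx
    obtain ⟨M, hM⟩ := exists_nat_ge ‖x‖
    have hball : ∀ᶠ m : ℕ in atTop,
        x ∈ Metric.closedBall (0 : EuclideanSpace ℝ (Fin n)) (m : ℝ) := by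
      filter_upwards [eventually_ge_atTop M] with m hm
      rw [Metric.mem_closedBall, dist_zero_right]
      exact hM.trans (by exact_mod_cast hm)
    filter_upwards [hfr, hball] with m hm hb
    have hnot : x ∉ symmDiff (Ek (φ m)) E := fun hmem => hm ⟨hmem, hb⟩
    rw [Set.mem_symmDiff] at hnot
    by_cases h1 : x ∈ Ek (φ m) <;> by_cases h2 : x ∈ E <;>
      simp_all [Set.indicator_apply]
  -- upgrade to the product space
  classical
  set N : Set (EuclideanSpace ℝ (Fin n)) := {x | ¬ ∀ᶠ m in atTop, (Ek (φ m)).indicator (fun _ => (1 : ℝ)) x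
      = E.indicator (fun _ => (1 : ℝ)) x} with hN
  have hNnull : volume N = 0 := by rw [ae_iff] at hae; exact hae
  have hae2 : ∀ᵐ p ∂(volume : Measure (EuclideanSpace ℝ (Fin n) × EuclideanSpace ℝ (Fin n))),
      ∀ᶠ m in atTop, ((Ek (φ m)).indicator (fun _ => (1 : ℝ)) p.1
          = E.indicator (fun _ => (1 : ℝ)) p.1) ∧
        ((Ek (φ m)).indicator (fun _ => (1 : ℝ)) p.2
          = E.indicator (fun _ => (1 : ℝ)) p.2) := by
    have h1 : ∀ᵐ p ∂(volume : Measure (EuclideanSpace ℝ (Fin n) × EuclideanSpace ℝ (Fin n))),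
        ∀ᶠ m in atTop, (Ek (φ m)).indicator (fun _ => (1 : ℝ)) p.1
          = E.indicator (fun _ => (1 : ℝ)) p.1 := by
      rw [ae_iff]
      refine measure_mono_null (t := N ×ˢ (Set.univ : Set (EuclideanSpace ℝ (Fin n))))
        (fun p hp => Set.mem_prod.2 ⟨hp, Set.mem_univ _⟩) ?_
      rw [Measure.volume_eq_prod, Measure.prod_prod, hNnull, zero_mul]
    have h2 : ∀ᵐ p ∂(volume : Measure (EuclideanSpace ℝ (Fin n) × EuclideanSpace ℝ (Fin n))),
        ∀ᶠ m in atTop, (Ek (φ m)).indicator (fun _ => (1 : ℝ)) p.2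
          = E.indicator (fun _ => (1 : ℝ)) p.2 := by
      rw [ae_iff]
      refine measure_mono_null (t := (Set.univ : Set (EuclideanSpace ℝ (Fin n))) ×ˢ N)
        (fun p hp => Set.mem_prod.2 ⟨Set.mem_univ _, hp⟩) ?_
      rw [Measure.volume_eq_prod, Measure.prod_prod, hNnull, mul_zero]
    filter_upwards [h1, h2] with p hp1 hp2 using hp1.and hp2
  -- pointwise liminf identity
  have hlim : ∀ᵐ p ∂(volume : Measure (EuclideanSpace ℝ (Fin n) × EuclideanSpace ℝ (Fin n))),
      perIntegrand K E U p = atTop.liminf (fun m => perIntegrand K (Ek (φ m)) U p) := by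
    filter_upwards [hae2] with p hp
    have hev : ∀ᶠ m in atTop, perIntegrand K (Ek (φ m)) U p = perIntegrand K E U p := by
      filter_upwards [hp] with m hm
      have hj : jumpWeight (Ek (φ m)) p.1 p.2 = jumpWeight E p.1 p.2 := by
        unfold jumpWeight; rw [hm.1, hm.2]
      unfold perIntegrand
      rw [Set.indicator_apply, Set.indicator_apply, Set.indicator_apply, Set.indicator_apply, hj]
    rw [liminf_congr hev, liminf_const]
  -- Fatou and conclusion
  calc nonlocalPerLoc K E U
      = ∫⁻ p, perIntegrand K E U p ∂volume := nonlocalPerLoc_eq_lintegral hKmeas hE hU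
    _ = ∫⁻ p, atTop.liminf (fun m => perIntegrand K (Ek (φ m)) U p) ∂volume :=
        lintegral_congr_ae hlim
    _ ≤ atTop.liminf (fun m => ∫⁻ p, perIntegrand K (Ek (φ m)) U p ∂volume) :=
        lintegral_liminf_le fun m => perIntegrand_measurable hKmeas (hEk _) hU
    _ = atTop.liminf (fun m => f (φ m)) := by
        refine liminf_congr (Eventually.of_forall fun m => ?_)
        rw [hf]
        exact (nonlocalPerLoc_eq_lintegral hKmeas (hEk _) hU).symm
    _ ≤ atTop.liminf (fun m : ℕ => a + (m : ℝ≥0∞)⁻¹) :=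
        liminf_le_liminf (Eventually.of_forall fun m => (hφ m).1.le)
    _ = a := by
        refine Tendsto.liminf_eq ?_
        have : Tendsto (fun m : ℕ => a + (m : ℝ≥0∞)⁻¹) atTop (nhds (a + 0)) :=
          Tendsto.add tendsto_const_nhds ENNReal.tendsto_inv_nat_nhds_zero
        simpa using this
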